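/- arXiv:1401.1448 — 3 statements merged into one kernel-verified Lean document; each statement's English description precedes it below -/
import Mathlib

section
/- For functions f,g : A* → ℕ∪{∞}, define f ≼ g iff for every set W ⊆ A*, if g is bounded on W then f is bounded on W. Then f ≼ g if and only if there exists a monotone-extendable correction function α : ℕ → ℕ (extended by α(∞)=∞) such that f ≤ α ∘ g. -/
/-- `f` is bounded on `W` by some natural number (so `∞` never occurs on `W`). -/
def BoundedOn {A : Type*} (f : List A → ℕ∞) (W : Set (List A)) : Prop :=
  ∃ N : ℕ, ∀ u ∈ W, f u < (N : ℕ∞)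

/-- `f ≼ g` : every set on which `g` is bounded is a set on which `f` is bounded. -/
def CostLE {A : Type*} (f g : List A → ℕ∞) : Prop :=
  ∀ W : Set (List A), BoundedOn g W → BoundedOn f W

/-- `f ≼ g` iff there is a (monotone-extendable) correction function
`α : ℕ → ℕ` (extended by `α(∞) = ∞`, i.e. `WithTop.map`) with `f ≤ α ∘ g`. -/
theorem costLE_iff_exists_correction {A : Type*} (f g : List A → ℕ∞) :
    CostLE f g ↔ ∃ α : ℕ → ℕ, Monotone α ∧ ∀ u : List A, f u ≤ (g u).map α := by
  constructor
  · intro h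
    have hW : ∀ n : ℕ, BoundedOn f {u | g u ≤ (n : ℕ∞)} := by
      intro n
      apply h
      exact ⟨n + 1, fun u hu =>
        lt_of_le_of_lt hu (by exact_mod_cast Nat.lt_succ_self n)⟩
    choose N hN using hW
    refine ⟨fun n => Finset.sup (Finset.range (n + 1)) N, ?_, ?_⟩
    · intro a b hab
      exact Finset.sup_mono (Finset.range_subset_range.mpr (by omega))
    · intro u
      cases hgu : g u with
      | top => exact le_top
      | coe n =>
        have h1 : f u < (N n : ℕ∞) := hN n u (by simp [hgu])
        have h2 : N n ≤ Finset.sup (Finset.range (n + 1)) N :=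
          Finset.le_sup (Finset.self_mem_range_succ n)
        calc f u ≤ (N n : ℕ∞) := le_of_lt h1
          _ ≤ ((Finset.sup (Finset.range (n + 1)) N : ℕ) : ℕ∞) := by exact_mod_cast h2
          _ = (show ℕ∞ from ((n : ℕ∞)).map (fun n => Finset.sup (Finset.range (n + 1)) N)) := rfl
  · rintro ⟨α, hmono, hle⟩ W ⟨N, hN⟩
    refine ⟨α N + 1, fun u hu => ?_⟩
    have hg : g u < (N : ℕ∞) := hN u hu
    obtain ⟨m, hm⟩ := WithTop.ne_top_iff_exists.mp (ne_top_of_lt hg)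
    have hmN : m ≤ N := by
      rw [← hm] at hg
      exact le_of_lt (WithTop.coe_lt_coe.mp hg)
    calc f u ≤ (show ℕ∞ from (g u).map α) := hle u
      _ = (α m : ℕ∞) := by rw [← hm]; rfl
      _ ≤ (α N : ℕ∞) := by exact_mod_cast hmono hmN
      _ < ((α N + 1 : ℕ) : ℕ∞) := by exact_mod_cast Nat.lt_succ_self _
end

section
/- A sequence a ∈ E^ℕ is α-non-decreasing (i.e. a ≼_α a) for some correction function α if and only if it is ∼-equivalent (for some correction function) to a non-decreasing sequence. -/
/-- a sequence `a : ℕ → E` is `α`-non-decreasing for some correction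
function `α` (i.e. `a(n) ≤ a(m)` whenever `n ≤ m` and `α(n) ≤ m`) iff it is
`∼_β`-equivalent, for some correction function `β`, to a non-decreasing sequence. -/
theorem alpha_nondecreasing_iff_sim_monotone {E : Type*} [Preorder E] (a : ℕ → E) :
    (∃ α : ℕ → ℕ, ∀ n m : ℕ, n ≤ m → α n ≤ m → a n ≤ a m) ↔
    (∃ (β : ℕ → ℕ) (b : ℕ → E), Monotone b ∧
      (∀ n m : ℕ, β n ≤ m → a n ≤ b m) ∧ (∀ n m : ℕ, β n ≤ m → b n ≤ a m)) := by
  constructor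
  · rintro ⟨α, hα⟩
    set A : ℕ → ℕ := fun n => (Finset.range (n+1)).sup α with hA
    have hαA : ∀ n, α n ≤ A n := fun n => Finset.le_sup (Finset.self_mem_range_succ n)
    let c : ℕ → ℕ := fun n => Nat.rec 0 (fun _ ck => max (ck + 1) (A ck)) n
    have hcs : ∀ n, c (n+1) = max (c n + 1) (A (c n)) := fun n => rfl
    have hcge : ∀ n, n ≤ c n := by
      intro n; induction n with
      | zero => exact Nat.zero_le _
      | succ k ih => rw [hcs]; omega
    have hstep : ∀ n, a (c n) ≤ a (c (n+1)) := by
      intro n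
      apply hα
      · rw [hcs]; omega
      · rw [hcs]; exact le_max_of_le_right (hαA (c n))
    have hb : Monotone fun n => a (c n) := monotone_nat_of_le_succ hstep
    refine ⟨fun n => n + A n + c n + 1 + A (c n), fun n => a (c n), hb, ?_, ?_⟩
    · intro n m hm
      replace hm : n + A n + c n + 1 + A (c n) ≤ m := hm
      apply hα
      · calc n ≤ m := by omega
          _ ≤ c m := hcge m
      · calc α n ≤ A n := hαA n
          _ ≤ m := by omega
          _ ≤ c m := hcge m
    · intro n m hm
      replace hm : n + A n + c n + 1 + A (c n) ≤ m := hm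
      apply hα
      · omega
      · calc α (c n) ≤ A (c n) := hαA (c n)
          _ ≤ m := by omega
  · rintro ⟨β, b, hb, h1, h2⟩
    exact ⟨fun n => β (β n), fun n m _ h => le_trans (h1 n (β n) le_rfl) (h2 (β n) m h)⟩
end

section
/- Let M be an aperiodic finite stabilization monoid and b ∈ M with b ≠ 1. Define M' = Mb ∩ bM with product xb ∘ by = xby. Then M' is a monoid with neutral element b, M' is aperiodic, 1 ∉ M', and |M'| < |M|. -/
open Classical in
/-- The local divisor product: `xb ∘ by = xby`.  For `u ∈ Mb` and `v ∈ bM` this is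
well defined and given by `circ b u v = x * v` where `u = x * b`. -/
noncomputable def circ {M : Type*} [Monoid M] (b u v : M) : M :=
  if h : ∃ x, u = x * b then Classical.choose h * v else u * v

/-- Powers with respect to `circ`: `cpow b u n = u^{∘(n+1)}`. -/
noncomputable def cpow {M : Type*} [Monoid M] (b u : M) : ℕ → M
  | 0 => u
  | n + 1 => circ b (cpow b u n) u

lemma circ_eq {M : Type*} [Monoid M] (b u v x y : M) (hu : u = x * b) (hv : v = b * y) :
    circ b u v = x * b * y := by
  subst hu hv
  have h : ∃ x', x * b = x' * b := ⟨x, rfl⟩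
  rw [circ, dif_pos h]
  have := (Classical.choose_spec h).symm
  rw [← mul_assoc, this]

lemma cpow_eq {M : Type*} [Monoid M] (b u x y : M) (hu : u = x * b) (hv : u = b * y) :
    ∀ n, cpow b u n = x ^ n * u := by
  intro n
  induction n with
  | zero => simp [cpow]
  | succ n ih =>
      have h1 : cpow b u n = (x ^ n * x) * b := by rw [ih, hu, mul_assoc]
      rw [cpow, circ_eq b _ u (x ^ n * x) y h1 hv, mul_assoc, ← hv, pow_succ]

/-- let `M` be a finite aperiodic monoid and `b ≠ 1`.  Then
`M' = Mb ∩ bM` with product `xb ∘ by = xby` is a monoid with neutral element `b`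
(the product is well defined, `M'` is closed under it and it is associative on
`M'`), `M'` is aperiodic, `1 ∉ M'`, and `|M'| < |M|`. -/
theorem local_divisor_monoid {M : Type*} [Monoid M] [Finite M] (k : ℕ)
    (hap : ∀ m : M, m ^ (k + 1) = m ^ k) (b : M) (hb : b ≠ 1) :
    let M' : Set M := {m | (∃ x, m = x * b) ∧ ∃ y, m = b * y}
    -- the product is well defined: `xb ∘ by = xby`
    (∀ u v x y : M, u = x * b → v = b * y → circ b u v = x * b * y) ∧
    -- `M'` is closed under the product
    (∀ u ∈ M', ∀ v ∈ M', circ b u v ∈ M') ∧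
    -- `b ∈ M'` is a neutral element
    b ∈ M' ∧ (∀ u ∈ M', circ b b u = u ∧ circ b u b = u) ∧
    -- associativity on `M'`
    (∀ u ∈ M', ∀ v ∈ M', ∀ w ∈ M', circ b (circ b u v) w = circ b u (circ b v w)) ∧
    -- `M'` is aperiodic
    (∃ k' : ℕ, ∀ u ∈ M', cpow b u (k' + 1) = cpow b u k') ∧
    -- `1 ∉ M'` and `|M'| < |M|`
    (1 : M) ∉ M' ∧ Nat.card M' < Nat.card M := by
  intro M'
  have h1 : (1 : M) ∉ M' := by
    rintro ⟨⟨x, hx⟩, ⟨y, hy⟩⟩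
    have hxy : x = y := by
      calc x = x * (b * y) := by rw [← hy, mul_one]
        _ = (x * b) * y := by rw [mul_assoc]
        _ = y := by rw [← hx, one_mul]
    have hby : b * y = 1 := hy.symm
    have hyb : y * b = 1 := by rw [← hxy, ← hx]
    have key : ∀ n, b ^ n * y ^ n = 1 := by
      intro n
      induction n with
      | zero => simp
      | succ n ih =>
          calc b ^ (n + 1) * y ^ (n + 1) = b ^ n * (b * y) * y ^ n := by
                rw [pow_succ, pow_succ']; simp only [mul_assoc]
            _ = b ^ n * y ^ n := by rw [hby, mul_one]
            _ = 1 := ih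
    have : b = 1 := by
      calc b = b * (b ^ k * y ^ k) := by rw [key, mul_one]
        _ = b ^ (k + 1) * y ^ k := by rw [pow_succ', mul_assoc]
        _ = b ^ k * y ^ k := by rw [hap]
        _ = 1 := key k
    exact hb this
  refine ⟨fun u v x y hu hv => circ_eq b u v x y hu hv, ?_, ?_, ?_, ?_, ?_, h1, ?_⟩
  · rintro u ⟨⟨x, hx⟩, ⟨y', hy'⟩⟩ v ⟨⟨x', hx'⟩, ⟨y, hy⟩⟩
    rw [circ_eq b u v x y hx hy]
    exact ⟨⟨x * x', by rw [mul_assoc, ← hy, hx', ← mul_assoc]⟩,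
      ⟨y' * y, by rw [← hx, hy', mul_assoc]⟩⟩
  · exact ⟨⟨1, (one_mul b).symm⟩, ⟨1, (mul_one b).symm⟩⟩
  · rintro u ⟨⟨x, hx⟩, ⟨y, hy⟩⟩
    constructor
    · rw [circ_eq b b u 1 y (one_mul b).symm hy, one_mul, ← hy]
    · rw [circ_eq b u b x 1 hx (mul_one b).symm, mul_one, ← hx]
  · rintro u ⟨⟨x, hx⟩, ⟨yu, hyu⟩⟩ v ⟨⟨x', hx'⟩, ⟨y, hy⟩⟩ w ⟨⟨xw, hxw⟩, ⟨z, hz⟩⟩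
    have huv : circ b u v = (x * x') * b := by
      rw [circ_eq b u v x y hx hy, mul_assoc, ← hy, hx', ← mul_assoc]
    have hvw : circ b v w = b * (y * z) := by
      rw [circ_eq b v w x' z hx' hz, ← hx', hy, mul_assoc]
    rw [circ_eq b _ w (x * x') z huv hz, circ_eq b u _ x (y * z) hx hvw]
    rw [← mul_assoc, mul_assoc x b y, ← hy, hx', ← mul_assoc x x' b]
  · refine ⟨k, ?_⟩
    rintro u ⟨⟨x, hx⟩, ⟨y, hy⟩⟩
    rw [cpow_eq b u x y hx hy, cpow_eq b u x y hx hy, hap]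
  · have : M' ⊂ Set.univ := (Set.ssubset_univ_iff).2 (fun h => h1 (h ▸ Set.mem_univ 1))
    calc Nat.card M' = M'.ncard := (Nat.card_coe_set_eq M')
      _ < (Set.univ : Set M).ncard := Set.ncard_lt_ncard this (Set.finite_univ)
      _ = Nat.card M := Set.ncard_univ M
end
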